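/- (Fubini-type theorem for the Segre embedding.) Let n > 2 and m > 2, let P₀ and Q₀ be fixed rank-one orthogonal projections on ℂⁿ and ℂᵐ, and let μₙ, μₘ be the normalized Haar probability measures on U(n) and U(m). For every complex matrix M indexed by (Fin n × Fin m) × (Fin n × Fin m), n·m·∫_{U(n)}∫_{U(m)} tr( M·((U P₀ Uᴴ) ⊗ₖ (V Q₀ Vᴴ)) ) dμₘ(V) dμₙ(U) = tr(M). In the paper's language: ∫_{P(ℂⁿ)×P(ℂᵐ)} ρ∘Seg dν_H dν_K = ∫_{P(ℂⁿ⊗ℂᵐ)} ρ dν for the frame function ρ(r) = tr(Mr). -/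

import Mathlib

open MeasureTheory Matrix Kronecker

noncomputable instance (k : Type*) [Fintype k] [DecidableEq k] :
    MeasurableSpace (Matrix.unitaryGroup k ℂ) := borel _

/-- `p` is a rank-one orthogonal projection. -/
def IsRankOneProj {k : Type*} [Fintype k] [DecidableEq k] (p : Matrix k k ℂ) : Prop :=
  p.IsHermitian ∧ p * p = p ∧ p.rank = 1

instance (k : Type*) [Fintype k] [DecidableEq k] :
    BorelSpace (Matrix.unitaryGroup k ℂ) := ⟨rfl⟩

instance (k : Type*) [Fintype k] [DecidableEq k] :
    MeasurableMul (Matrix.unitaryGroup k ℂ) := by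
  refine ⟨fun c => ?_, fun c => ?_⟩
  · have h : Continuous fun x : Matrix.unitaryGroup k ℂ => (c.1 * x.1 : Matrix k k ℂ) :=
      continuous_const.matrix_mul continuous_subtype_val
    exact (h.subtype_mk (fun x => mul_mem c.2 x.2)).measurable
  · have h : Continuous fun x : Matrix.unitaryGroup k ℂ => (x.1 * c.1 : Matrix k k ℂ) :=
      continuous_subtype_val.matrix_mul continuous_const
    exact (h.subtype_mk (fun x => mul_mem x.2 c.2)).measurable

lemma entry_norm_le {N : ℕ} (U : Matrix.unitaryGroup (Fin N) ℂ) (i j : Fin N) :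
    ‖U.1 i j‖ ≤ 1 := by
  have h2 := (Unitary.mem_iff.mp U.2).2
  have h3 : (U.1 * star U.1) i i = (1 : Matrix (Fin N) (Fin N) ℂ) i i := by rw [h2]
  rw [Matrix.star_eq_conjTranspose, Matrix.mul_apply, Matrix.one_apply_eq] at h3
  simp only [Matrix.conjTranspose_apply, Complex.star_def, Complex.mul_conj] at h3
  rw [← Complex.ofReal_sum] at h3
  have h4 : ∑ k, Complex.normSq (U.1 i k) = 1 := by exact_mod_cast h3
  have h5 : Complex.normSq (U.1 i j) ≤ 1 := by
    rw [← h4]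
    exact Finset.single_le_sum (fun k _ => Complex.normSq_nonneg _) (Finset.mem_univ j)
  rw [← Real.sqrt_one, Complex.norm_def]
  exact Real.sqrt_le_sqrt h5

lemma integrable_entry {N : ℕ} (P : Matrix (Fin N) (Fin N) ℂ)
    (μ : Measure (Matrix.unitaryGroup (Fin N) ℂ)) [IsProbabilityMeasure μ] (i j : Fin N) :
    Integrable (fun U : Matrix.unitaryGroup (Fin N) ℂ => (U.1 * P * (U.1)ᴴ) i j) μ := by
  have hcont : Continuous fun U : Matrix.unitaryGroup (Fin N) ℂ => (U.1 * P * (U.1)ᴴ) i j :=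
    ((continuous_subtype_val.matrix_mul continuous_const).matrix_mul
       continuous_subtype_val.matrix_conjTranspose).matrix_elem i j
  refine ⟨hcont.aestronglyMeasurable, ?_⟩
  apply MeasureTheory.HasFiniteIntegral.of_bounded (C := ∑ l, ∑ k, ‖P k l‖)
  filter_upwards with U
  calc ‖(U.1 * P * (U.1)ᴴ) i j‖ = ‖∑ l, ∑ k, U.1 i k * P k l * star (U.1 j l)‖ := by
        simp [Matrix.mul_apply, Matrix.conjTranspose_apply, Finset.sum_mul]
    _ ≤ ∑ l, ∑ k, ‖U.1 i k * P k l * star (U.1 j l)‖ :=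
        (norm_sum_le _ _).trans (Finset.sum_le_sum fun l _ => norm_sum_le _ _)
    _ ≤ ∑ l, ∑ k, ‖P k l‖ := by
        refine Finset.sum_le_sum fun l _ => Finset.sum_le_sum fun k _ => ?_
        rw [norm_mul, norm_mul, norm_star]
        calc ‖U.1 i k‖ * ‖P k l‖ * ‖U.1 j l‖ ≤ 1 * ‖P k l‖ * 1 := by
              gcongr
              · exact entry_norm_le U i k
              · exact entry_norm_le U j l
          _ = ‖P k l‖ := by ring

lemma key_rel {N : ℕ} (P : Matrix (Fin N) (Fin N) ℂ)
    (μ : Measure (Matrix.unitaryGroup (Fin N) ℂ)) [IsProbabilityMeasure μ] [μ.IsMulLeftInvariant]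
    (W : Matrix.unitaryGroup (Fin N) ℂ) (a b : Fin N) :
    ∑ l, ∑ k, (W.1 a k * star (W.1 b l)) * ∫ U, (U.1 * P * (U.1)ᴴ) k l ∂μ
      = ∫ U, (U.1 * P * (U.1)ᴴ) a b ∂μ := by
  have h0 : ∀ U : Matrix.unitaryGroup (Fin N) ℂ,
      ((W * U).1 * P * ((W * U).1)ᴴ) a b
        = ∑ l, ∑ k, (W.1 a k * star (W.1 b l)) * ((U.1 * P * (U.1)ᴴ) k l) := by
    intro U
    have h1 : (W * U).1 * P * ((W * U).1)ᴴ = W.1 * (U.1 * P * (U.1)ᴴ) * (W.1)ᴴ := by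
      push_cast
      rw [Matrix.conjTranspose_mul]
      noncomm_ring
    rw [h1, Matrix.mul_apply]
    simp_rw [Matrix.mul_apply, Matrix.conjTranspose_apply, Finset.sum_mul]
    exact Finset.sum_congr rfl fun l _ => Finset.sum_congr rfl fun k _ => by ring
  calc ∑ l, ∑ k, (W.1 a k * star (W.1 b l)) * ∫ U, (U.1 * P * (U.1)ᴴ) k l ∂μ
      = ∫ U, ((W * U).1 * P * ((W * U).1)ᴴ) a b ∂μ := by
        rw [show (fun U => ((W * U).1 * P * ((W * U).1)ᴴ) a b)
            = fun U => ∑ l, ∑ k, (W.1 a k * star (W.1 b l)) * ((U.1 * P * (U.1)ᴴ) k l)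
          from funext h0]
        rw [integral_finset_sum _ fun l _ =>
          integrable_finset_sum _ fun k _ => (integrable_entry P μ k l).const_mul _]
        refine Finset.sum_congr rfl fun l _ => ?_
        rw [integral_finset_sum _ fun k _ => (integrable_entry P μ k l).const_mul _]
        exact Finset.sum_congr rfl fun k _ => (integral_const_mul _ _).symm
    _ = ∫ U, (U.1 * P * (U.1)ᴴ) a b ∂μ :=
        integral_mul_left_eq_self (μ := μ)
          (fun V : Matrix.unitaryGroup (Fin N) ℂ => (V.1 * P * (V.1)ᴴ) a b) W

lemma diag_sign_mem {N : ℕ} (k : Fin N) :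
    Matrix.diagonal (fun x => if x = k then (-1:ℂ) else 1) ∈ Matrix.unitaryGroup (Fin N) ℂ := by
  set d : Fin N → ℂ := fun x => if x = k then (-1:ℂ) else 1 with hd
  have hδ : star d = d := by
    funext x
    by_cases hx : x = k <;> simp [hd, hx]
  have hstar : star (Matrix.diagonal d) = Matrix.diagonal d := by
    rw [Matrix.star_eq_conjTranspose, Matrix.diagonal_conjTranspose, hδ]
  have hdd : (fun i => d i * d i) = fun _ => (1:ℂ) := by
    funext x
    by_cases hx : x = k <;> simp [hd, hx]
  have hsq : Matrix.diagonal d * Matrix.diagonal d = 1 := by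
    rw [Matrix.diagonal_mul_diagonal, hdd, Matrix.diagonal_one]
  exact Unitary.mem_iff.mpr ⟨by rw [hstar, hsq], by rw [hstar, hsq]⟩

lemma swap_mem {N : ℕ} (k j : Fin N) :
    (Matrix.of fun a b : Fin N => if b = Equiv.swap k j a then (1:ℂ) else 0)
      ∈ Matrix.unitaryGroup (Fin N) ℂ := by
  set σ := Equiv.swap k j with hσ
  set S : Matrix (Fin N) (Fin N) ℂ := Matrix.of fun a b => if b = σ a then (1:ℂ) else 0 with hS
  have hstar : star S = Matrix.of fun a b : Fin N => if a = σ b then (1:ℂ) else 0 := by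
    rw [Matrix.star_eq_conjTranspose]
    ext a b
    simp only [Matrix.conjTranspose_apply, hS, Matrix.of_apply]
    by_cases h : a = σ b <;> simp [h]
  have h1 : star S * S = 1 := by
    ext a b
    rw [hstar]
    simp only [Matrix.mul_apply, Matrix.of_apply, hS]
    rw [Finset.sum_eq_single (σ a)]
    · have hinv : ∀ x, σ (σ x) = x := fun x => Equiv.swap_apply_self k j x
      simp only [hinv, if_pos rfl, one_mul]
      rw [Matrix.one_apply]
      by_cases h : a = b <;> simp [h, eq_comm]
    · intro c _ hc
      have : ¬ (a = σ c) := fun h => hc (by rw [h, hσ, Equiv.swap_apply_self])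
      simp [this]
    · simp
  have h2 : S * star S = 1 := by
    ext a b
    rw [hstar]
    simp only [Matrix.mul_apply, Matrix.of_apply, hS]
    rw [Finset.sum_eq_single (σ a)]
    · simp only [if_pos rfl, one_mul]
      rw [Matrix.one_apply]
      by_cases h : a = b <;> simp [h, Equiv.apply_eq_iff_eq, eq_comm]
    · intro c _ hc
      simp [hc]
    · simp
  exact Unitary.mem_iff.mpr ⟨h1, h2⟩

lemma integral_entry_eq {N : ℕ} (hN : 0 < N) (P : Matrix (Fin N) (Fin N) ℂ) (htr : P.trace = 1)
    (μ : Measure (Matrix.unitaryGroup (Fin N) ℂ)) [IsProbabilityMeasure μ] [μ.IsMulLeftInvariant]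
    (i j : Fin N) :
    ∫ U : Matrix.unitaryGroup (Fin N) ℂ, (U.1 * P * (U.1)ᴴ) i j ∂μ
      = if i = j then ((N : ℂ))⁻¹ else 0 := by
  set A : Fin N → Fin N → ℂ := fun k l => ∫ U, (U.1 * P * (U.1)ᴴ) k l ∂μ with hA
  have hoff : ∀ k l : Fin N, k ≠ l → A k l = 0 := by
    intro k l hkl
    have hrel := key_rel P μ ⟨_, diag_sign_mem k⟩ k l
    simp only [Matrix.diagonal_apply, ← hA] at hrel
    rw [Finset.sum_eq_single l] at hrel
    rotate_left
    · intro c _ hc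
      refine Finset.sum_eq_zero fun k' _ => ?_
      have : ¬ (l = c) := fun h => hc h.symm
      simp [this]
    · simp
    rw [Finset.sum_eq_single k] at hrel
    rotate_left
    · intro c _ hc
      have : ¬ (k = c) := fun h => hc h.symm
      simp [this]
    · simp
    have hlk : ¬ (l = k) := Ne.symm hkl
    simp only [if_pos rfl, hlk, if_true, if_false, if_neg hlk, star_one, mul_one,
      neg_mul, one_mul, neg_one_mul] at hrel
    linear_combination (-1/2 : ℂ) * hrel
  have hdiag : ∀ k : Fin N, A k k = A ⟨0, hN⟩ ⟨0, hN⟩ := by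
    intro k
    set i0 : Fin N := ⟨0, hN⟩ with hi0
    have hrel := key_rel P μ ⟨_, swap_mem k i0⟩ k k
    simp only [Matrix.of_apply, Equiv.swap_apply_left, ← hA] at hrel
    rw [Finset.sum_eq_single i0] at hrel
    rotate_left
    · intro c _ hc
      refine Finset.sum_eq_zero fun k' _ => ?_
      simp [hc]
    · simp
    rw [Finset.sum_eq_single i0] at hrel
    rotate_left
    · intro c _ hc
      simp [hc]
    · simp
    simpa using hrel.symm
  have hsum : ∑ k : Fin N, A k k = 1 := by
    have h1 : ∑ k : Fin N, A k k
        = ∫ U : Matrix.unitaryGroup (Fin N) ℂ, ∑ k, (U.1 * P * (U.1)ᴴ) k k ∂μ :=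
      (integral_finset_sum _ fun k _ => integrable_entry P μ k k).symm
    have h2 : ∀ U : Matrix.unitaryGroup (Fin N) ℂ,
        ∑ k, (U.1 * P * (U.1)ᴴ) k k = 1 := by
      intro U
      have h3 : ∑ k, (U.1 * P * (U.1)ᴴ) k k = (U.1 * P * (U.1)ᴴ).trace := rfl
      rw [h3, Matrix.trace_mul_comm, ← Matrix.mul_assoc]
      have hU : (U.1)ᴴ * U.1 = 1 := by
        have := (Unitary.mem_iff.mp U.2).1
        rwa [Matrix.star_eq_conjTranspose] at this
      rw [hU, Matrix.one_mul, htr]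
    rw [h1]
    simp only [h2]
    simp
  by_cases hij : i = j
  · subst hij
    rw [Finset.sum_congr rfl (fun k _ => hdiag k)] at hsum
    simp only [Finset.sum_const, Finset.card_univ, Fintype.card_fin, nsmul_eq_mul] at hsum
    rw [if_pos rfl]
    exact (hdiag i).trans (eq_inv_of_mul_eq_one_left (by rw [mul_comm]; exact hsum))
  · rw [if_neg hij]
    exact hoff i j hij

lemma trace_of_rankOneProj {N : ℕ} (P : Matrix (Fin N) (Fin N) ℂ) (h : IsRankOneProj P) :
    P.trace = 1 := by
  obtain ⟨-, hidem, hrank⟩ := h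
  have hf : P.mulVecLin ∘ₗ P.mulVecLin = P.mulVecLin := by
    rw [← Matrix.mulVecLin_mul, hidem]
  obtain ⟨p, hp⟩ := (LinearMap.isProj_iff_isIdempotentElem P.mulVecLin).mpr hf
  have hrange : p = LinearMap.range P.mulVecLin := by
    apply le_antisymm
    · intro x hx
      exact ⟨x, hp.map_id x hx⟩
    · rintro x ⟨y, rfl⟩
      exact hp.map_mem y
  have htr := hp.trace
  rw [hrange] at htr
  have h2 : Module.finrank ℂ (LinearMap.range P.mulVecLin) = 1 := hrank
  rw [h2] at htr
  have h3 : LinearMap.trace ℂ (Fin N → ℂ) P.mulVecLin = P.trace := by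
    rw [LinearMap.trace_eq_matrix_trace ℂ (Pi.basisFun ℂ (Fin N)),
      LinearMap.toMatrix_eq_toMatrix', ← Matrix.toLin'_apply', LinearMap.toMatrix'_toLin']
  rw [← h3, htr, Nat.cast_one]

/-- Fubini-type theorem for the Segre embedding:
`nm ∫∫ tr(M (p_U ⊗ₖ q_V)) dμₘ(V) dμₙ(U) = tr M`. -/
theorem fubini_segre (n m : ℕ) (hn : 2 < n) (hm : 2 < m)
    (P₀ : Matrix (Fin n) (Fin n) ℂ) (hP₀ : IsRankOneProj P₀)
    (Q₀ : Matrix (Fin m) (Fin m) ℂ) (hQ₀ : IsRankOneProj Q₀)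
    (μn : Measure (Matrix.unitaryGroup (Fin n) ℂ))
    [IsProbabilityMeasure μn] [μn.IsMulLeftInvariant]
    (μm : Measure (Matrix.unitaryGroup (Fin m) ℂ))
    [IsProbabilityMeasure μm] [μm.IsMulLeftInvariant]
    (M : Matrix (Fin n × Fin m) (Fin n × Fin m) ℂ) :
    ((n : ℂ) * (m : ℂ)) *
      ∫ U : Matrix.unitaryGroup (Fin n) ℂ,
        ∫ V : Matrix.unitaryGroup (Fin m) ℂ,
          (M * ((U.1 * P₀ * (U.1)ᴴ) ⊗ₖ (V.1 * Q₀ * (V.1)ᴴ))).trace ∂μm ∂μn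
      = M.trace := by
  have hn0 : 0 < n := by omega
  have hm0 : 0 < m := by omega
  have hPtr : P₀.trace = 1 := trace_of_rankOneProj P₀ hP₀
  have hQtr : Q₀.trace = 1 := trace_of_rankOneProj Q₀ hQ₀
  have hinner : ∀ U : Matrix.unitaryGroup (Fin n) ℂ,
      (∫ V : Matrix.unitaryGroup (Fin m) ℂ,
          (M * ((U.1 * P₀ * (U.1)ᴴ) ⊗ₖ (V.1 * Q₀ * (V.1)ᴴ))).trace ∂μm)
        = ∑ a : Fin n × Fin m, ∑ b : Fin n × Fin m,
            (M a b * (if b.2 = a.2 then ((m : ℂ))⁻¹ else 0)) * (U.1 * P₀ * (U.1)ᴴ) b.1 a.1 := by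
    intro U
    have hptw : ∀ V : Matrix.unitaryGroup (Fin m) ℂ,
        (M * ((U.1 * P₀ * (U.1)ᴴ) ⊗ₖ (V.1 * Q₀ * (V.1)ᴴ))).trace
          = ∑ a : Fin n × Fin m, ∑ b : Fin n × Fin m,
              (M a b * (U.1 * P₀ * (U.1)ᴴ) b.1 a.1) * ((V.1 * Q₀ * (V.1)ᴴ) b.2 a.2) := by
      intro V
      simp only [Matrix.trace, Matrix.diag, Matrix.mul_apply, Matrix.kroneckerMap_apply]
      exact Finset.sum_congr rfl fun a _ => Finset.sum_congr rfl fun b _ => by ring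
    simp only [hptw]
    rw [integral_finset_sum _ fun a _ =>
      integrable_finset_sum _ fun b _ => (integrable_entry Q₀ μm b.2 a.2).const_mul _]
    refine Finset.sum_congr rfl fun a _ => ?_
    rw [integral_finset_sum _ fun b _ => (integrable_entry Q₀ μm b.2 a.2).const_mul _]
    refine Finset.sum_congr rfl fun b _ => ?_
    rw [integral_const_mul, integral_entry_eq hm0 Q₀ hQtr μm b.2 a.2]
    ring
  simp only [hinner]
  rw [integral_finset_sum _ fun a _ =>
    integrable_finset_sum _ fun b _ => (integrable_entry P₀ μn b.1 a.1).const_mul _]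
  have hout : ∀ a : Fin n × Fin m,
      (∫ U : Matrix.unitaryGroup (Fin n) ℂ, ∑ b : Fin n × Fin m,
          (M a b * (if b.2 = a.2 then ((m : ℂ))⁻¹ else 0)) * (U.1 * P₀ * (U.1)ᴴ) b.1 a.1 ∂μn)
        = ∑ b : Fin n × Fin m, (M a b * (if b.2 = a.2 then ((m : ℂ))⁻¹ else 0))
            * (if b.1 = a.1 then ((n : ℂ))⁻¹ else 0) := by
    intro a
    rw [integral_finset_sum _ fun b _ => (integrable_entry P₀ μn b.1 a.1).const_mul _]
    refine Finset.sum_congr rfl fun b _ => ?_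
    rw [integral_const_mul, integral_entry_eq hn0 P₀ hPtr μn b.1 a.1]
  simp only [hout]
  have hcollapse : ∀ a : Fin n × Fin m,
      (∑ b : Fin n × Fin m, (M a b * (if b.2 = a.2 then ((m : ℂ))⁻¹ else 0))
          * (if b.1 = a.1 then ((n : ℂ))⁻¹ else 0))
        = M a a * ((m : ℂ))⁻¹ * ((n : ℂ))⁻¹ := by
    intro a
    rw [Fintype.sum_eq_single a]
    · simp [mul_assoc]
    · intro b hb
      by_cases h1 : b.1 = a.1
      · have h2 : ¬ (b.2 = a.2) := fun h2 => hb (Prod.ext h1 h2)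
        simp [h2]
      · simp [h1]
  simp only [hcollapse]
  have hne1 : (n : ℂ) ≠ 0 := Nat.cast_ne_zero.mpr (by omega)
  have hne2 : (m : ℂ) ≠ 0 := Nat.cast_ne_zero.mpr (by omega)
  rw [Matrix.trace]
  simp only [Matrix.diag]
  rw [Finset.mul_sum]
  refine Finset.sum_congr rfl fun a _ => ?_
  field_simp
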